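/- Let $u:[-1,1]\to\mathbb{R}$ be continuous with $-1<u(x)\le 0$ for every $x\in[-1,1]$, and let $\psi:[-1,1]\times\mathbb{R}\to\mathbb{R}$ be such that for each $x\in[-1,1]$ the function $z\mapsto\psi(x,z)$ is differentiable on $[-1,u(x)]$, $\psi(x,-1)=0$, and $\psi(x,u(x))=1$. Then $\int_{-1}^{1}\int_{-1}^{u(x)}\big(\partial_z\psi(x,z)\big)^2\,\mathrm{d}z\,\mathrm{d}x \;\ge\; \int_{-1}^{1}\frac{\mathrm{d}x}{1+u(x)} \;\ge\; 2$, where the integrals are taken in the extended (Lebesgue) sense. -/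

import Mathlib

open MeasureTheory
open scoped ENNReal

private lemma onevar (a b : ℝ) (hab : a < b) (f f' : ℝ → ℝ)
    (hd : ∀ z ∈ Set.Icc a b, HasDerivAt f (f' z) z)
    (h0 : f a = 0) (h1 : f b = 1) :
    ENNReal.ofReal (1 / (b - a)) ≤ ∫⁻ z in Set.Ioo a b, ENNReal.ofReal ((f' z) ^ 2) := by
  set μ := volume.restrict (Set.Ioo a b) with hμ
  set E := ∫⁻ z in Set.Ioo a b, ENNReal.ofReal ((f' z) ^ 2) with hE
  -- f' agrees with deriv f on Ioo a b
  have hderiv_eq : ∀ z ∈ Set.Ioo a b, deriv f z = f' z := by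
    intro z hz
    exact (hd z (Set.Ioo_subset_Icc_self hz)).deriv
  have hae : ∀ᵐ z ∂μ, deriv f z = f' z :=
    ae_restrict_of_forall_mem measurableSet_Ioo hderiv_eq
  have hgm : AEMeasurable (fun z => ENNReal.ofReal |f' z|) μ := by
    refine AEMeasurable.congr (f := fun z => ENNReal.ofReal |deriv f z|) ?_ ?_
    · exact (measurable_deriv f).abs.ennreal_ofReal.aemeasurable
    · filter_upwards [hae] with z hz using by rw [hz]
  set c := ENNReal.ofReal (b - a) with hc
  have hcne0 : c ≠ 0 := by
    simp only [hc, ne_eq, ENNReal.ofReal_eq_zero, not_le]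
    linarith
  have hcnetop : c ≠ ⊤ := ENNReal.ofReal_ne_top
  -- Hölder / Cauchy-Schwarz
  have hsq : ∀ z : ℝ, (ENNReal.ofReal |f' z|) ^ (2:ℝ) = ENNReal.ofReal ((f' z) ^ 2) := by
    intro z
    rw [show ((2:ℝ)) = ((2:ℕ):ℝ) by norm_num, ENNReal.rpow_natCast,
      ← ENNReal.ofReal_pow (abs_nonneg _), sq_abs]
  have holder : (∫⁻ z, ENNReal.ofReal |f' z| ∂μ) ≤ c ^ (1/2 : ℝ) * E ^ (1/2 : ℝ) := by
    have hpq : (2:ℝ).HolderConjugate 2 := by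
      constructor <;> norm_num
    have := ENNReal.lintegral_mul_le_Lp_mul_Lq μ hpq (aemeasurable_const (b := (1:ℝ≥0∞))) hgm
    simp only [Pi.mul_apply, one_mul, ENNReal.one_rpow, lintegral_const] at this
    calc (∫⁻ z, ENNReal.ofReal |f' z| ∂μ)
        ≤ (μ Set.univ) ^ (1/2 : ℝ) * (∫⁻ z, (ENNReal.ofReal |f' z|) ^ (2:ℝ) ∂μ) ^ (1/2 : ℝ) := by
          simpa using this
      _ = c ^ (1/2 : ℝ) * E ^ (1/2 : ℝ) := by
          congr 1
          · rw [hμ, Measure.restrict_apply_univ, Real.volume_Ioo]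
          · congr 1
            rw [hE]
            exact lintegral_congr fun z => hsq z
  rcases eq_or_ne E ⊤ with hEtop | hEtop
  · rw [hEtop]; exact le_top
  -- f' is integrable on Ioo a b
  have hGlt : (∫⁻ z, ENNReal.ofReal |f' z| ∂μ) < ⊤ := by
    refine lt_of_le_of_lt holder ?_
    exact ENNReal.mul_lt_top (ENNReal.rpow_lt_top_of_nonneg (by norm_num) hcnetop)
      (ENNReal.rpow_lt_top_of_nonneg (by norm_num) hEtop)
  have hint : IntegrableOn f' (Set.Ioo a b) := by
    constructor
    · refine (measurable_deriv f).aestronglyMeasurable.congr ?_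
      filter_upwards [hae] with z hz using hz
    · rw [HasFiniteIntegral]
      simpa only [Real.enorm_eq_ofReal_abs] using hGlt
  have hii : IntervalIntegrable f' volume a b := by
    rw [intervalIntegrable_iff_integrableOn_Ioc_of_le hab.le,
      integrableOn_Ioc_iff_integrableOn_Ioo]
    exact hint
  have hftc : ∫ z in a..b, f' z = 1 := by
    rw [intervalIntegral.integral_eq_sub_of_hasDerivAt (fun z hz => hd z (by rwa [Set.uIcc_of_le hab.le] at hz)) hii,
      h0, h1, sub_zero]
  -- 1 ≤ ∫⁻ |f'|
  have habs : (1:ℝ) ≤ ∫ z in Set.Ioo a b, |f' z| := by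
    have h1le : (1:ℝ) ≤ |∫ z in a..b, f' z| := by rw [hftc]; norm_num
    refine le_trans h1le ?_
    have := intervalIntegral.abs_integral_le_integral_abs (a := a) (b := b) (f := f') (μ := volume) hab.le
    refine le_trans this ?_
    rw [intervalIntegral.integral_of_le hab.le, MeasureTheory.integral_Ioc_eq_integral_Ioo]
  have hone : (1:ℝ≥0∞) ≤ ∫⁻ z, ENNReal.ofReal |f' z| ∂μ := by
    rw [← ofReal_integral_eq_lintegral_ofReal hint.abs
      (ae_restrict_of_forall_mem measurableSet_Ioo fun z _ => abs_nonneg _)]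
    calc (1:ℝ≥0∞) = ENNReal.ofReal 1 := by simp
      _ ≤ _ := ENNReal.ofReal_le_ofReal habs
  -- combine: 1 ≤ c * E
  have hcE : (1:ℝ≥0∞) ≤ c * E := by
    have h12 : (1:ℝ≥0∞) ≤ (c * E) ^ (1/2 : ℝ) := by
      calc (1:ℝ≥0∞) ≤ c ^ (1/2:ℝ) * E ^ (1/2:ℝ) := le_trans hone holder
        _ = (c * E) ^ (1/2:ℝ) := (ENNReal.mul_rpow_of_nonneg _ _ (by norm_num)).symm
    calc (1:ℝ≥0∞) = (1:ℝ≥0∞) ^ (2:ℝ) := by rw [ENNReal.one_rpow]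
      _ ≤ ((c * E) ^ (1/2:ℝ)) ^ (2:ℝ) := ENNReal.rpow_le_rpow h12 (by norm_num)
      _ = c * E := by rw [← ENNReal.rpow_mul]; norm_num
  have : c⁻¹ ≤ E := by
    calc c⁻¹ = c⁻¹ * 1 := (mul_one _).symm
      _ ≤ c⁻¹ * (c * E) := mul_le_mul_right hcE _
      _ = (c⁻¹ * c) * E := (mul_assoc _ _ _).symm
      _ = E := by rw [ENNReal.inv_mul_cancel hcne0 hcnetop, one_mul]
  calc ENNReal.ofReal (1 / (b - a)) = c⁻¹ := by
        rw [one_div, ENNReal.ofReal_inv_of_pos (sub_pos.mpr hab)]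
    _ ≤ E := this

/-- Lower bound on the vertical Dirichlet energy (Lemma 2.7, lower bound, classical form):
if `-1 < u ≤ 0` and `ψ(x,·)` is differentiable on `[-1, u x]` with `ψ(x,-1) = 0` and
`ψ(x,u x) = 1`, then
`∫∫ (∂_z ψ)² ≥ ∫ dx/(1+u) ≥ 2`, the integrals being extended Lebesgue integrals. -/
theorem stmt_0 (u : ℝ → ℝ) (ψ ψz : ℝ → ℝ → ℝ)
    (hu_cont : ContinuousOn u (Set.Icc (-1) 1))
    (hu : ∀ x ∈ Set.Icc (-1:ℝ) 1, -1 < u x ∧ u x ≤ 0)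
    (hψ : ∀ x ∈ Set.Icc (-1:ℝ) 1, ∀ z ∈ Set.Icc (-1:ℝ) (u x), HasDerivAt (ψ x) (ψz x z) z)
    (hψ0 : ∀ x ∈ Set.Icc (-1:ℝ) 1, ψ x (-1) = 0)
    (hψ1 : ∀ x ∈ Set.Icc (-1:ℝ) 1, ψ x (u x) = 1) :
    (∫⁻ x in Set.Ioo (-1:ℝ) 1, ENNReal.ofReal (1 / (1 + u x))) ≤
      (∫⁻ x in Set.Ioo (-1:ℝ) 1, ∫⁻ z in Set.Ioo (-1:ℝ) (u x),
        ENNReal.ofReal ((ψz x z) ^ 2)) ∧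
    (2 : ℝ≥0∞) ≤ ∫⁻ x in Set.Ioo (-1:ℝ) 1, ENNReal.ofReal (1 / (1 + u x)) := by
  constructor
  · refine lintegral_mono_ae ?_
    refine ae_restrict_of_forall_mem measurableSet_Ioo ?_
    intro x hx
    have hx' : x ∈ Set.Icc (-1:ℝ) 1 := Set.Ioo_subset_Icc_self hx
    have hub := hu x hx'
    have key := onevar (-1) (u x) (by linarith [hub.1]) (ψ x) (ψz x)
      (hψ x hx') (hψ0 x hx') (hψ1 x hx')
    have : u x - (-1) = 1 + u x := by ring
    rwa [this] at key
  · have hmono : ∀ x ∈ Set.Ioo (-1:ℝ) 1, (1:ℝ≥0∞) ≤ ENNReal.ofReal (1 / (1 + u x)) := by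
      intro x hx
      have hub := hu x (Set.Ioo_subset_Icc_self hx)
      have h1 : (0:ℝ) < 1 + u x := by linarith [hub.1]
      have h2 : (1:ℝ) ≤ 1 / (1 + u x) := by
        rw [le_div_iff₀ h1]; linarith [hub.2]
      calc (1:ℝ≥0∞) = ENNReal.ofReal 1 := by simp
        _ ≤ _ := ENNReal.ofReal_le_ofReal h2
    calc (2:ℝ≥0∞) = ∫⁻ _ in Set.Ioo (-1:ℝ) 1, 1 := by
          rw [setLIntegral_one, Real.volume_Ioo]
          norm_num
      _ ≤ _ := lintegral_mono_ae (ae_restrict_of_forall_mem measurableSet_Ioo hmono)
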